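/- Let φ be the radial solution of Δφ = c²φ in the ball B(x₀, R) ⊂ ℝⁿ with φ = q̄ > 0 on ∂B(x₀, R). Then φ(x) = ϕ(|x - x₀|, R) where ϕ(·, R) : [0, R] → ℝ is positive and strictly increasing on (0, R], with ϕ(R, R) = q̄. Moreover φ(0) ≤ q̄ e^{-k₀ R} for some constant k₀ > 0 depending only on c and n, uniformly for R ≥ R̄ > 0. -/

import Mathlib

open Metric Set Filter

noncomputable section Aux14

variable {n : ℕ}

local notation "E" => EuclideanSpace ℝ (Fin n)

/-- unit coordinate vector -/
def ee (i : Fin n) : EuclideanSpace ℝ (Fin n) := EuclideanSpace.single i 1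

/-- the Laplacian-like sum appearing in the statement -/
def lap (φ : EuclideanSpace ℝ (Fin n) → ℝ) (x : EuclideanSpace ℝ (Fin n)) : ℝ :=
  ∑ i, fderiv ℝ (fun y => fderiv ℝ φ y (ee i)) x (ee i)

lemma line_hasDerivAt (y v : E) (s : ℝ) :
    HasDerivAt (fun t : ℝ => y + t • v) v s := by
  simpa using ((hasDerivAt_id s).smul_const v).const_add y

lemma slice_hasDerivAt {φ : E → ℝ} {y v : E} {s : ℝ}
    (h : DifferentiableAt ℝ φ (y + s • v)) :
    HasDerivAt (fun t => φ (y + t • v)) (fderiv ℝ φ (y + s • v) v) s :=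
  h.hasFDerivAt.comp_hasDerivAt s (line_hasDerivAt y v s)

lemma hasFDerivAt_fderiv_apply {φ : E → ℝ} {y : E} (hφ : ContDiffAt ℝ 2 φ y) (v : E) :
    HasFDerivAt (fun z => fderiv ℝ φ z v)
      ((ContinuousLinearMap.apply ℝ ℝ v).comp (fderiv ℝ (fderiv ℝ φ) y)) y := by
  have h1 : DifferentiableAt ℝ (fderiv ℝ φ) y := by
    have := hφ.fderiv_right (m := 1) (by norm_num)
    exact this.differentiableAt (by norm_num)
  exact (ContinuousLinearMap.apply ℝ ℝ v).hasFDerivAt.comp y h1.hasFDerivAt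




/-- 1D second derivative test at a local max -/
lemma deriv2_nonpos_of_isLocalMax {g d : ℝ → ℝ} {A : ℝ}
    (hg : ∀ᶠ s in nhds (0:ℝ), HasDerivAt g (d s) s)
    (hd : HasDerivAt d A 0) (hmax : IsLocalMax g 0) : A ≤ 0 := by
  by_contra hA
  push_neg at hA
  have hd0 : d 0 = 0 := by
    have := hmax.deriv_eq_zero
    rwa [hg.self_of_nhds.deriv] at this
  -- d s > 0 for small s > 0
  have hslope : Filter.Tendsto (fun s => s⁻¹ * (d s - d 0)) (nhdsWithin 0 {(0:ℝ)}ᶜ) (nhds A) := by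
    have := hasDerivAt_iff_tendsto_slope.1 hd
    simpa [slope_fun_def] using this
  have hpos : ∀ᶠ s in nhdsWithin (0:ℝ) (Set.Ioi 0), 0 < d s := by
    have h1 : ∀ᶠ s in nhdsWithin 0 {(0:ℝ)}ᶜ, 0 < s⁻¹ * (d s - d 0) :=
      hslope.eventually (eventually_gt_nhds hA)
    have h2 : ∀ᶠ s in nhdsWithin (0:ℝ) (Set.Ioi 0), 0 < s⁻¹ * (d s - d 0) :=
      nhdsWithin_mono 0 (fun s hs => ne_of_gt hs) h1
    filter_upwards [h2, self_mem_nhdsWithin] with s hs hs'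
    have hs0 : (0:ℝ) < s := hs'
    nlinarith [mul_pos hs0 hs, inv_pos.2 hs0]
  -- find ε with both properties on (0, ε)
  obtain ⟨ε₁, hε₁, hsub₁⟩ := eventually_nhds_iff_ball.1 hg
  have hpos' := eventually_nhdsWithin_iff.1 hpos
  obtain ⟨ε₂, hε₂, hsub₂⟩ := eventually_nhds_iff_ball.1 hpos'
  obtain ⟨ε₃, hε₃, hsub₃⟩ := eventually_nhds_iff_ball.1 hmax
  set ε := min ε₁ (min ε₂ ε₃) with hε
  have hεpos : 0 < ε := lt_min hε₁ (lt_min hε₂ hε₃)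
  -- g is strictly monotone on [0, ε/2]
  have hmono : StrictMonoOn g (Set.Icc 0 (ε/2)) := by
    apply strictMonoOn_of_deriv_pos (convex_Icc _ _)
    · intro s hs
      have : |s| < ε₁ := by
        rw [abs_of_nonneg hs.1]; calc s ≤ ε/2 := hs.2
        _ < ε := by linarith
        _ ≤ ε₁ := min_le_left _ _
      exact ((hsub₁ s (by simpa [Metric.mem_ball, Real.dist_eq] using this)).differentiableAt.continuousAt).continuousWithinAt
    · intro s hs
      rw [interior_Icc] at hs
      have hs1 : |s| < ε₁ := by
        rw [abs_of_pos hs.1]; calc s < ε/2 := hs.2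
        _ < ε := by linarith
        _ ≤ ε₁ := min_le_left _ _
      have hs2 : |s| < ε₂ := by
        rw [abs_of_pos hs.1]
        calc s < ε/2 := hs.2
        _ < ε := by linarith
        _ ≤ ε₂ := le_trans (min_le_right _ _) (min_le_left _ _)
      have hder := hsub₁ s (by simpa [Metric.mem_ball, Real.dist_eq] using hs1)
      rw [hder.deriv]
      exact hsub₂ s (by simpa [Metric.mem_ball, Real.dist_eq] using hs2) hs.1
  have hlt : g 0 < g (ε/2) := hmono ⟨le_refl 0, by positivity⟩ ⟨by positivity, le_refl _⟩ (by positivity)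
  have : g (ε/2) ≤ g 0 := by
    apply hsub₃
    simp only [Metric.mem_ball, Real.dist_eq, sub_zero]
    rw [abs_of_pos (by positivity)]
    calc ε/2 < ε := by linarith
    _ ≤ ε₃ := le_trans (min_le_right _ _) (min_le_right _ _)
  linarith



/-- local max implies each Laplacian term nonpositive -/
lemma lapterm_nonpos_of_localmax {φ : E → ℝ} {x : E}
    (hφ : ContDiffAt ℝ 2 φ x) (hmax : IsLocalMax φ x) (i : Fin n) :
    fderiv ℝ (fun y => fderiv ℝ φ y (ee i)) x (ee i) ≤ 0 := by
  set v : E := ee i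
  set g : ℝ → ℝ := fun t => φ (x + t • v) with hgdef
  set d : ℝ → ℝ := fun s => fderiv ℝ φ (x + s • v) v with hddef
  have hcont : Continuous (fun t : ℝ => x + t • v) := by continuity
  have hline0 : (x + (0:ℝ) • v) = x := by simp
  have hev : ∀ᶠ s in nhds (0:ℝ), ContDiffAt ℝ 2 φ (x + s • v) := by
    have h1 : ∀ᶠ y in nhds x, ContDiffAt ℝ 2 φ y := hφ.eventually (by norm_num)
    have h2 : Filter.Tendsto (fun s : ℝ => x + s • v) (nhds 0) (nhds x) := by
      simpa [hline0] using (hcont.tendsto 0)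
    exact h2.eventually h1
  have hg : ∀ᶠ s in nhds (0:ℝ), HasDerivAt g (d s) s := by
    filter_upwards [hev] with s hs
    exact slice_hasDerivAt (hs.differentiableAt (by norm_num))
  have hd : HasDerivAt d (fderiv ℝ (fun y => fderiv ℝ φ y v) x v) 0 := by
    have h1 := hasFDerivAt_fderiv_apply hφ v
    rw [← hline0] at h1
    have h2 := h1.comp_hasDerivAt 0 (line_hasDerivAt x v 0)
    have h3 : HasDerivAt d (((ContinuousLinearMap.apply ℝ ℝ v).comp (fderiv ℝ (fderiv ℝ φ) x)) v) 0 := by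
      simp only [hline0] at h2; exact h2
    have h4 : fderiv ℝ (fun y => fderiv ℝ φ y v) x =
        (ContinuousLinearMap.apply ℝ ℝ v).comp (fderiv ℝ (fderiv ℝ φ) x) :=
      (hasFDerivAt_fderiv_apply hφ v).fderiv
    rw [h4]
    exact h3
  have hmax' : IsLocalMax g 0 := by
    have := (hcont.tendsto 0).eventually (by have hm : ∀ᶠ y in nhds x, φ y ≤ φ x := hmax; simpa [hline0] using hm)
    simpa [hgdef, IsLocalMax, IsMaxFilter, hline0] using this
  exact deriv2_nonpos_of_isLocalMax hg hd hmax'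

/-- Maximum principle: a C² subsolution of Δu = c² u nonpositive on the sphere is nonpositive. -/
lemma max_principle {x₀ : E} {r c : ℝ} (hr : 0 < r) (hc : 0 < c) {u : E → ℝ}
    (hu : ContDiffOn ℝ 2 u (closedBall x₀ r))
    (hpde : ∀ x ∈ ball x₀ r, c^2 * u x ≤ lap u x)
    (hb : ∀ x ∈ sphere x₀ r, u x ≤ 0) :
    ∀ x ∈ closedBall x₀ r, u x ≤ 0 := by
  obtain ⟨z, hz, hzmax⟩ := (isCompact_closedBall x₀ r).exists_isMaxOn
    (Metric.nonempty_closedBall.2 hr.le) (hu.continuousOn)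
  intro x hx
  have hxz : u x ≤ u z := hzmax hx
  by_contra hpos
  push_neg at hpos
  have hz0 : 0 < u z := lt_of_lt_of_le hpos hxz
  have hzball : z ∈ ball x₀ r := by
    rcases lt_or_eq_of_le (mem_closedBall.1 hz) with h | h
    · exact mem_ball.2 h
    · exact absurd (hb z (mem_sphere.2 h)) (by linarith)
  have hnhds : closedBall x₀ r ∈ nhds z :=
    Filter.mem_of_superset ((isOpen_ball).mem_nhds hzball) ball_subset_closedBall
  have hφat : ContDiffAt ℝ 2 u z := hu.contDiffAt hnhds
  have hlm : IsLocalMax u z := hzmax.isLocalMax hnhds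
  have hsum : lap u z ≤ 0 := by
    apply Finset.sum_nonpos
    intro i _
    exact lapterm_nonpos_of_localmax hφat hlm i
  have := hpde z hzball
  nlinarith [mul_pos (pow_pos hc 2) hz0]


lemma lapterm_sub {φ w : E → ℝ} {x : E} (hφ : ContDiffAt ℝ 2 φ x) (hw : ContDiffAt ℝ 2 w x) (v : E) :
    fderiv ℝ (fun y => fderiv ℝ (fun z => φ z - w z) y v) x v
      = fderiv ℝ (fun y => fderiv ℝ φ y v) x v - fderiv ℝ (fun y => fderiv ℝ w y v) x v := by
  have hev : (fun y => fderiv ℝ (fun z => φ z - w z) y v)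
      =ᶠ[nhds x] (fun y => fderiv ℝ φ y v - fderiv ℝ w y v) := by
    filter_upwards [hφ.eventually (by norm_num), hw.eventually (by norm_num)] with y hy1 hy2
    rw [fderiv_fun_sub (hy1.differentiableAt (by norm_num)) (hy2.differentiableAt (by norm_num))]
    simp
  rw [hev.fderiv_eq]
  rw [fderiv_fun_sub ((hasFDerivAt_fderiv_apply hφ v).differentiableAt)
      ((hasFDerivAt_fderiv_apply hw v).differentiableAt)]
  simp

lemma lap_sub {φ w : E → ℝ} {x : E} (hφ : ContDiffAt ℝ 2 φ x) (hw : ContDiffAt ℝ 2 w x) :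
    lap (fun y => φ y - w y) x = lap φ x - lap w x := by
  unfold lap
  rw [← Finset.sum_sub_distrib]
  exact Finset.sum_congr rfl fun i _ => lapterm_sub hφ hw (ee i)

/-- Laplacian of a function of a single coordinate -/
lemma lap_coord {f f' f'' : ℝ → ℝ} (hf : ∀ t, HasDerivAt f (f' t) t)
    (hf' : ∀ t, HasDerivAt f' (f'' t) t) (i : Fin n) (p : ℝ) (x : E) :
    lap (fun z : E => f (z i - p)) x = f'' (x i - p) := by
  have hproj : ∀ (y : E), HasFDerivAt (fun z : E => z i - p) (EuclideanSpace.proj i : E →L[ℝ] ℝ) y :=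
    fun y => ((EuclideanSpace.proj i : E →L[ℝ] ℝ).hasFDerivAt).sub_const p
  have hg : ∀ (y : E), HasFDerivAt (fun z : E => f (z i - p))
      (f' (y i - p) • (EuclideanSpace.proj i : E →L[ℝ] ℝ)) y :=
    fun y => (hf (y i - p)).comp_hasFDerivAt y (hproj y)
  have hπ : ∀ j : Fin n, (EuclideanSpace.proj i : E →L[ℝ] ℝ) (ee j) = if j = i then 1 else 0 := by
    intro j
    simp [ee, EuclideanSpace.single_apply, eq_comm]
  unfold lap
  have hterm : ∀ j : Fin n,
      fderiv ℝ (fun y => fderiv ℝ (fun z : E => f (z i - p)) y (ee j)) x (ee j)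
        = if j = i then f'' (x i - p) else 0 := by
    intro j
    have h1 : (fun y : E => fderiv ℝ (fun z : E => f (z i - p)) y (ee j))
        = fun y : E => f' (y i - p) * (if j = i then 1 else 0) := by
      funext y
      rw [(hg y).fderiv]
      simp [hπ j]
    rw [h1]
    by_cases hji : j = i
    · subst hji
      have h2 : ∀ (y : E), HasFDerivAt (fun z : E => f' (z j - p))
          (f'' (y j - p) • (EuclideanSpace.proj j : E →L[ℝ] ℝ)) y :=
        fun y => (hf' (y j - p)).comp_hasFDerivAt y (hproj y)
      have h3 : (fun y : E => f' (y j - p) * (if j = j then (1:ℝ) else 0))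
          = fun z : E => f' (z j - p) := by funext z; simp
      rw [h3, (h2 x).fderiv]
      simp [hπ j]
    · simp only [if_neg hji, mul_zero]
      rw [fderiv_const_apply]
      simp
  rw [Finset.sum_congr rfl fun j _ => hterm j]
  simp


lemma trace_invariance (H : (EuclideanSpace ℝ (Fin n)) →L[ℝ] (EuclideanSpace ℝ (Fin n)) →L[ℝ] ℝ)
    (A : (EuclideanSpace ℝ (Fin n)) ≃ₗᵢ[ℝ] (EuclideanSpace ℝ (Fin n))) :
    ∑ i, H (A (ee i)) (A (ee i)) = ∑ i, H (ee i) (ee i) := by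
  classical
  set b : OrthonormalBasis (Fin n) ℝ E := EuclideanSpace.basisFun (Fin n) ℝ with hb
  have hbe : ∀ i, b i = ee i := fun i => EuclideanSpace.basisFun_apply _ _ i
  set f : OrthonormalBasis (Fin n) ℝ E := b.map A with hf
  have hfe : ∀ i, f i = A (ee i) := by
    intro i; rw [hf, OrthonormalBasis.map_apply, hbe]
  -- expand H (f i) (f i)
  have hexp : ∀ (u w : E), H u w = ∑ j, ∑ k, (inner ℝ (b j) u : ℝ) * (inner ℝ (b k) w : ℝ) * H (b j) (b k) := by
    intro u w
    conv_lhs => rw [← b.sum_repr' u]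
    rw [map_sum, ContinuousLinearMap.sum_apply]
    refine Finset.sum_congr rfl fun j _ => ?_
    rw [map_smul, ContinuousLinearMap.smul_apply, smul_eq_mul]
    conv_lhs => rw [← b.sum_repr' w]
    rw [map_sum, Finset.mul_sum]
    refine Finset.sum_congr rfl fun k _ => ?_
    rw [map_smul, smul_eq_mul]
    ring
  have key : ∀ j k : Fin n, (∑ i, (inner ℝ (b j) (f i) : ℝ) * (inner ℝ (b k) (f i) : ℝ)) = if j = k then 1 else 0 := by
    intro j k
    have h1 : (∑ i, (inner ℝ (b j) (f i) : ℝ) * ((inner ℝ (f i) (b k)) : ℝ)) = inner ℝ (b j) (b k) :=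
      f.sum_inner_mul_inner (b j) (b k)
    have h2 : (∑ i, (inner ℝ (b j) (f i) : ℝ) * (inner ℝ (b k) (f i) : ℝ))
        = ∑ i, (inner ℝ (b j) (f i) : ℝ) * ((inner ℝ (f i) (b k)) : ℝ) := by
      apply Finset.sum_congr rfl; intro i _; rw [real_inner_comm (b k) (f i)]
    rw [h2, h1]
    rcases eq_or_ne j k with h | h
    · subst h; simp [hbe, ee, EuclideanSpace.inner_single_left, EuclideanSpace.single_apply]
    · simp only [if_neg h]
      have := b.orthonormal.2 (by exact fun hjk => h hjk : j ≠ k)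
      exact this
  calc ∑ i, H (A (ee i)) (A (ee i)) = ∑ i, H (f i) (f i) := by
        apply Finset.sum_congr rfl; intro i _; rw [hfe]
    _ = ∑ i, ∑ j, ∑ k, (inner ℝ (b j) (f i) : ℝ) * (inner ℝ (b k) (f i) : ℝ) * H (b j) (b k) := by
        apply Finset.sum_congr rfl; intro i _; exact hexp _ _
    _ = ∑ j, ∑ k, (∑ i, (inner ℝ (b j) (f i) : ℝ) * (inner ℝ (b k) (f i) : ℝ)) * H (b j) (b k) := by
        rw [Finset.sum_comm]
        apply Finset.sum_congr rfl; intro j _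
        rw [Finset.sum_comm]
        apply Finset.sum_congr rfl; intro k _
        rw [Finset.sum_mul]
    _ = ∑ j, H (b j) (b j) := by
        apply Finset.sum_congr rfl; intro j _
        rw [Finset.sum_eq_single j]
        · rw [key j j, if_pos rfl, one_mul]
        · intro k _ hk
          rw [key j k, if_neg (fun h => hk h.symm), zero_mul]
        · intro h; exact absurd (Finset.mem_univ j) h
    _ = ∑ i, H (ee i) (ee i) := by
        apply Finset.sum_congr rfl; intro i _; rw [hbe]


lemma lap_comp_isometry {φ : EuclideanSpace ℝ (Fin n) → ℝ} {x₀ : EuclideanSpace ℝ (Fin n)}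
    (A : (EuclideanSpace ℝ (Fin n)) ≃ₗᵢ[ℝ] (EuclideanSpace ℝ (Fin n))) {x : EuclideanSpace ℝ (Fin n)}
    (hφ : ContDiffAt ℝ 2 φ (x₀ + A (x - x₀))) :
    lap (fun z => φ (x₀ + A (z - x₀))) x = lap φ (x₀ + A (x - x₀)) := by
  classical
  set B : E →L[ℝ] E := A.toContinuousLinearEquiv.toContinuousLinearMap with hBdef
  have hB : ∀ u, B u = A u := fun u => rfl
  set T : E → E := fun z => x₀ + A (z - x₀) with hT
  have hTd : ∀ z, HasFDerivAt T B z := by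
    intro z
    have h1 : HasFDerivAt (fun z : E => z - x₀) (ContinuousLinearMap.id ℝ E) z :=
      (hasFDerivAt_id z).sub_const x₀
    have h2 := (B.hasFDerivAt.comp z h1).const_add x₀
    simpa [hT, hB] using h2
  have hTcont : Continuous T := by
    have := fun z => (hTd z).differentiableAt.continuousAt
    exact continuous_iff_continuousAt.2 this
  set H : E →L[ℝ] E →L[ℝ] ℝ := fderiv ℝ (fderiv ℝ φ) (T x) with hH
  have hev : ∀ᶠ y in nhds x, ContDiffAt ℝ 2 φ (T y) :=
    (hTcont.tendsto x).eventually (hφ.eventually (by norm_num))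
  set ψ : E → ℝ := fun z => φ (T z) with hψ
  -- each lap-term of ψ
  have hterm : ∀ i : Fin n,
      fderiv ℝ (fun y => fderiv ℝ ψ y (ee i)) x (ee i) = H (B (ee i)) (B (ee i)) := by
    intro i
    have heq : (fun y => fderiv ℝ ψ y (ee i)) =ᶠ[nhds x] (fun y => fderiv ℝ φ (T y) (B (ee i))) := by
      filter_upwards [hev] with y hy
      have h1 : HasFDerivAt ψ ((fderiv ℝ φ (T y)).comp B) y :=
        ((hy.differentiableAt (by norm_num)).hasFDerivAt).comp y (hTd y)
      rw [h1.fderiv]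
      rfl
    have hR : HasFDerivAt (fun y => fderiv ℝ φ (T y) (B (ee i)))
        (((ContinuousLinearMap.apply ℝ ℝ (B (ee i))).comp H).comp B) x :=
      by have h := (hasFDerivAt_fderiv_apply hφ (B (ee i))).comp x (hTd x); exact h
    rw [heq.fderiv_eq, hR.fderiv]
    rfl
  have hterm2 : ∀ i : Fin n,
      fderiv ℝ (fun z => fderiv ℝ φ z (ee i)) (T x) (ee i) = H (ee i) (ee i) := by
    intro i
    rw [(hasFDerivAt_fderiv_apply hφ (ee i)).fderiv]
    rfl
  unfold lap
  rw [Finset.sum_congr rfl fun i _ => hterm i, Finset.sum_congr rfl fun i _ => hterm2 i]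
  have : ∀ i, H (B (ee i)) (B (ee i)) = H (A (ee i)) (A (ee i)) := by
    intro i; rw [hB]
  rw [Finset.sum_congr rfl fun i _ => this i]
  exact trace_invariance H A


/-- solutions agree at points equidistant from the center -/
lemma radial_eq {R c qb : ℝ} (hR : 0 < R) (hc : 0 < c) {x₀ : EuclideanSpace ℝ (Fin n)}
    {φ : EuclideanSpace ℝ (Fin n) → ℝ}
    (hφ : ContDiffOn ℝ 2 φ (closedBall x₀ R))
    (hpde : ∀ x ∈ ball x₀ R, lap φ x = c^2 * φ x)
    (hbd : ∀ x ∈ sphere x₀ R, φ x = qb)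
    {x y : EuclideanSpace ℝ (Fin n)} (hx : x ∈ closedBall x₀ R) (hy : y ∈ closedBall x₀ R)
    (hdist : dist x x₀ = dist y x₀) : φ x = φ y := by
  classical
  have hnorm : ‖y - x₀‖ = ‖x - x₀‖ := by
    rw [← dist_eq_norm, ← dist_eq_norm, hdist]
  set A : E ≃ₗᵢ[ℝ] E := Submodule.reflection (ℝ ∙ ((y - x₀) - (x - x₀)))ᗮ with hA
  have hAyx : A (y - x₀) = x - x₀ := Submodule.reflection_sub hnorm
  set B : E →L[ℝ] E := A.toContinuousLinearEquiv.toContinuousLinearMap with hBdef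
  have hB : ∀ u, B u = A u := fun u => rfl
  set T : E → E := fun z => x₀ + A (z - x₀) with hT
  have hTdist : ∀ z, dist (T z) x₀ = dist z x₀ := by
    intro z
    rw [dist_eq_norm, dist_eq_norm, hT]
    simp only [add_sub_cancel_left]
    exact A.norm_map _
  have hTsmooth : ContDiff ℝ 2 T := by
    have : ContDiff ℝ 2 (fun z : E => B (z - x₀)) :=
      B.contDiff.comp (contDiff_id.sub contDiff_const)
    have h2 : ContDiff ℝ 2 (fun z : E => x₀ + B (z - x₀)) := contDiff_const.add this
    exact h2
  set ψ : E → ℝ := fun z => φ (T z) with hψ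
  have hmapsCB : MapsTo T (closedBall x₀ R) (closedBall x₀ R) := by
    intro z hz; rw [mem_closedBall] at *; rw [hTdist]; exact hz
  have hψsmooth : ContDiffOn ℝ 2 ψ (closedBall x₀ R) :=
    hφ.comp (hTsmooth.contDiffOn) hmapsCB
  have hball : ∀ z ∈ ball x₀ R, T z ∈ ball x₀ R := by
    intro z hz; rw [mem_ball] at *; rw [hTdist]; exact hz
  have hCBat : ∀ z ∈ ball x₀ R, ContDiffAt ℝ 2 φ z := by
    intro z hz
    exact hφ.contDiffAt (Filter.mem_of_superset ((isOpen_ball).mem_nhds hz) ball_subset_closedBall)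
  have hψpde : ∀ z ∈ ball x₀ R, lap ψ z = c^2 * ψ z := by
    intro z hz
    have h1 := lap_comp_isometry A (x₀ := x₀) (x := z) (hCBat _ (hball z hz))
    rw [hψ]
    rw [show (fun z => φ (T z)) = (fun z => φ (x₀ + A (z - x₀))) from rfl]
    rw [h1]
    exact hpde _ (hball z hz)
  have hψbd : ∀ z ∈ sphere x₀ R, ψ z = qb := by
    intro z hz
    rw [mem_sphere] at hz
    exact hbd _ (by rw [mem_sphere, hTdist]; exact hz)
  -- uniqueness via the maximum principle applied to ±(φ - ψ)
  have hCBψat : ∀ z ∈ ball x₀ R, ContDiffAt ℝ 2 ψ z := by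
    intro z hz
    exact hψsmooth.contDiffAt (Filter.mem_of_superset ((isOpen_ball).mem_nhds hz) ball_subset_closedBall)
  have h1 : ∀ z ∈ closedBall x₀ R, φ z - ψ z ≤ 0 := by
    apply max_principle hR hc (hφ.sub hψsmooth)
    · intro z hz
      rw [lap_sub (hCBat z hz) (hCBψat z hz), hpde z hz, hψpde z hz]
      ring_nf
      exact le_refl _
    · intro z hz
      rw [hbd z hz, hψbd z hz, sub_self]
  have h2 : ∀ z ∈ closedBall x₀ R, ψ z - φ z ≤ 0 := by
    apply max_principle hR hc (hψsmooth.sub hφ)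
    · intro z hz
      rw [lap_sub (hCBψat z hz) (hCBat z hz), hpde z hz, hψpde z hz]
      ring_nf
      exact le_refl _
    · intro z hz
      rw [hbd z hz, hψbd z hz, sub_self]
  have heq : φ y = ψ y := le_antisymm (by linarith [h1 y hy, h2 y hy]) (by linarith [h1 y hy, h2 y hy])
  rw [heq, hψ]
  simp only [hT]
  rw [hAyx]
  congr 1
  abel


lemma cosh_hasDeriv (a : ℝ) (t : ℝ) :
    HasDerivAt (fun t => Real.cosh (a*t)) (Real.sinh (a*t) * a) t := by
  simpa [Function.comp_def] using (Real.hasDerivAt_cosh (a*t)).comp t ((hasDerivAt_id t).const_mul a)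

lemma sinh_hasDeriv (a : ℝ) (t : ℝ) :
    HasDerivAt (fun t => Real.sinh (a*t) * a) (Real.cosh (a*t) * a * a) t := by
  have := (((Real.hasDerivAt_sinh (a*t)).comp t ((hasDerivAt_id t).const_mul a))).mul_const a
  simp only [Function.comp, id_eq, mul_one] at this
  exact this

/-- Laplacian of sum over coordinates of a fixed profile -/
lemma lap_sum_coord {f f' f'' : ℝ → ℝ} (hf : ∀ t, HasDerivAt f (f' t) t)
    (hf' : ∀ t, HasDerivAt f' (f'' t) t) (p x : EuclideanSpace ℝ (Fin n)) :
    lap (fun z : EuclideanSpace ℝ (Fin n) => ∑ i, f (z i - p i)) x = ∑ i, f'' (x i - p i) := by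
  classical
  have hproj : ∀ (i : Fin n) (y : E), HasFDerivAt (fun z : E => z i - p i)
      (EuclideanSpace.proj i : E →L[ℝ] ℝ) y :=
    fun i y => ((EuclideanSpace.proj i : E →L[ℝ] ℝ).hasFDerivAt).sub_const (p i)
  have hπ : ∀ i j : Fin n, (EuclideanSpace.proj i : E →L[ℝ] ℝ) (ee j) = if i = j then 1 else 0 := by
    intro i j
    simp [ee, EuclideanSpace.single_apply, eq_comm]
  have hg : ∀ (y : E), HasFDerivAt (fun z : E => ∑ i, f (z i - p i))
      (∑ i, f' (y i - p i) • (EuclideanSpace.proj i : E →L[ℝ] ℝ)) y := by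
    intro y
    exact HasFDerivAt.fun_sum (fun i _ => (hf (y i - p i)).comp_hasFDerivAt y (hproj i y))
  have happ : ∀ (y : E) (j : Fin n),
      (∑ i, f' (y i - p i) • (EuclideanSpace.proj i : E →L[ℝ] ℝ)) (ee j) = f' (y j - p j) := by
    intro y j
    rw [ContinuousLinearMap.sum_apply]
    rw [Finset.sum_eq_single j]
    · rw [ContinuousLinearMap.smul_apply, hπ j j, if_pos rfl, smul_eq_mul, mul_one]
    · intro i _ hij
      rw [ContinuousLinearMap.smul_apply, hπ i j, if_neg hij, smul_eq_mul, mul_zero]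
    · intro h; exact absurd (Finset.mem_univ j) h
  unfold lap
  apply Finset.sum_congr rfl
  intro j _
  have h1 : (fun y : E => fderiv ℝ (fun z : E => ∑ i, f (z i - p i)) y (ee j))
      = fun y : E => f' (y j - p j) := by
    funext y
    rw [(hg y).fderiv, happ]
  rw [h1]
  have h2 : HasFDerivAt (fun z : E => f' (z j - p j))
      (f'' (x j - p j) • (EuclideanSpace.proj j : E →L[ℝ] ℝ)) x :=
    (hf' (x j - p j)).comp_hasFDerivAt x (hproj j x)
  rw [h2.fderiv]
  have := hπ j j
  rw [ContinuousLinearMap.smul_apply, this, if_pos rfl, smul_eq_mul, mul_one]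


/-- comparison principle: φ below a supersolution w -/
lemma comparison_le {R c : ℝ} (hR : 0 < R) (hc : 0 < c) {x₀ : EuclideanSpace ℝ (Fin n)}
    {φ w : EuclideanSpace ℝ (Fin n) → ℝ}
    (hφ : ContDiffOn ℝ 2 φ (closedBall x₀ R))
    (hpde : ∀ x ∈ ball x₀ R, lap φ x = c^2 * φ x)
    (hw : ContDiffOn ℝ 2 w (closedBall x₀ R))
    (hwpde : ∀ x ∈ ball x₀ R, lap w x = c^2 * w x)
    (hbd : ∀ x ∈ sphere x₀ R, φ x ≤ w x) :
    ∀ x ∈ closedBall x₀ R, φ x ≤ w x := by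
  have hCBat : ∀ z ∈ ball x₀ R, ContDiffAt ℝ 2 φ z := fun z hz =>
    hφ.contDiffAt (Filter.mem_of_superset ((isOpen_ball).mem_nhds hz) ball_subset_closedBall)
  have hCBatw : ∀ z ∈ ball x₀ R, ContDiffAt ℝ 2 w z := fun z hz =>
    hw.contDiffAt (Filter.mem_of_superset ((isOpen_ball).mem_nhds hz) ball_subset_closedBall)
  have h := max_principle hR hc (hφ.sub hw)
    (fun z hz => by
      rw [lap_sub (hCBat z hz) (hCBatw z hz), hpde z hz, hwpde z hz]; ring_nf; exact le_refl _)
    (fun z hz => by simpa using sub_nonpos.2 (hbd z hz))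
  intro x hx
  linarith [h x hx]


lemma coord_abs_le_norm (u : EuclideanSpace ℝ (Fin n)) (i : Fin n) : |u i| ≤ ‖u‖ := by
  rw [EuclideanSpace.norm_eq]
  have h1 : |u i| = Real.sqrt (‖u i‖^2) := by
    rw [Real.sqrt_sq_eq_abs]; simp
  rw [h1]
  apply Real.sqrt_le_sqrt
  exact Finset.single_le_sum (f := fun j => ‖u j‖^2) (fun j _ => sq_nonneg _) (Finset.mem_univ i)

/-- positivity of solutions -/
lemma phi_pos {R c qb : ℝ} (hn : 1 ≤ n) (hR : 0 < R) (hc : 0 < c) (hqb : 0 < qb)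
    {x₀ : EuclideanSpace ℝ (Fin n)} {φ : EuclideanSpace ℝ (Fin n) → ℝ}
    (hφ : ContDiffOn ℝ 2 φ (closedBall x₀ R))
    (hpde : ∀ x ∈ ball x₀ R, lap φ x = c^2 * φ x)
    (hbd : ∀ x ∈ sphere x₀ R, φ x = qb) :
    ∀ x ∈ closedBall x₀ R, 0 < φ x := by
  classical
  set i₀ : Fin n := ⟨0, hn⟩ with hi₀
  set α : ℝ := qb / Real.cosh (c*R) with hα
  have hαpos : 0 < α := div_pos hqb (Real.cosh_pos _)
  set f : ℝ → ℝ := fun t => α * Real.cosh (c*t) with hf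
  set v : E → ℝ := fun z => f (z i₀ - x₀ i₀) with hv
  have hf' : ∀ t, HasDerivAt f (α * (Real.sinh (c*t) * c)) t :=
    fun t => (cosh_hasDeriv c t).const_mul α
  have hf'' : ∀ t, HasDerivAt (fun t => α * (Real.sinh (c*t) * c)) (α * (Real.cosh (c*t) * c * c)) t := by
    intro t
    have := (sinh_hasDeriv c t).const_mul α
    simpa [mul_assoc] using this
  have hvlap : ∀ x : E, lap v x = c^2 * v x := by
    intro x
    rw [hv, lap_coord hf' hf'' i₀ (x₀ i₀) x]
    simp only [hf]
    ring
  have hvsmooth : ContDiffOn ℝ 2 v (closedBall x₀ R) := by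
    apply ContDiff.contDiffOn
    apply ContDiff.mul contDiff_const
    apply Real.contDiff_cosh.comp
    apply ContDiff.mul contDiff_const
    exact ((EuclideanSpace.proj i₀ : E →L[ℝ] ℝ).contDiff).sub contDiff_const
  have hvbd : ∀ z ∈ sphere x₀ R, v z ≤ φ z := by
    intro z hz
    rw [hbd z hz, hv]
    have hcoord : |z i₀ - x₀ i₀| ≤ R := by
      have h1 := coord_abs_le_norm (z - x₀) i₀
      have h2 : (z - x₀) i₀ = z i₀ - x₀ i₀ := rfl
      rw [h2] at h1
      rw [← dist_eq_norm] at h1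
      rw [mem_sphere] at hz
      rw [hz] at h1
      exact h1
    have hcosh : Real.cosh (c * (z i₀ - x₀ i₀)) ≤ Real.cosh (c*R) := by
      apply Real.cosh_le_cosh.2
      rw [abs_mul, abs_mul, abs_of_pos hc, abs_of_pos hR]
      exact mul_le_mul_of_nonneg_left hcoord hc.le
    calc f (z i₀ - x₀ i₀) = α * Real.cosh (c * (z i₀ - x₀ i₀)) := rfl
      _ ≤ α * Real.cosh (c*R) := by nlinarith
      _ = qb := by
          rw [hα]; field_simp
  have hcomp := comparison_le hR hc hvsmooth (fun x _ => hvlap x) hφ hpde hvbd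
  intro x hx
  have := hcomp x hx
  have hvpos : 0 < v x := by
    rw [hv]
    exact mul_pos hαpos (Real.cosh_pos _)
  linarith


/-- on the sphere, some coordinate is large -/
lemma exists_big_coord {R : ℝ} (hn : 1 ≤ n) (hR : 0 < R) {x₀ z : EuclideanSpace ℝ (Fin n)}
    (hz : z ∈ sphere x₀ R) : ∃ i, R / Real.sqrt n ≤ |z i - x₀ i| := by
  by_contra h
  push_neg at h
  have hns : (0:ℝ) < Real.sqrt n := Real.sqrt_pos.2 (by exact_mod_cast Nat.lt_of_lt_of_le Nat.zero_lt_one hn)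
  have hRn : 0 < R / Real.sqrt n := div_pos hR hns
  have hnorm : ‖z - x₀‖ = R := by rw [← dist_eq_norm]; exact mem_sphere.1 hz
  have hsum : ∑ i, ‖(z - x₀) i‖^2 = R^2 := by
    have h1 := EuclideanSpace.norm_eq (z - x₀)
    rw [hnorm] at h1
    have h2 : (0:ℝ) ≤ ∑ i, ‖(z - x₀) i‖^2 := Finset.sum_nonneg fun i _ => sq_nonneg _
    nlinarith [Real.sq_sqrt h2]
  have hlt : ∑ i, ‖(z - x₀) i‖^2 < R^2 := by
    have hbound : ∀ i : Fin n, ‖(z - x₀) i‖^2 < R^2 / n := by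
      intro i
      have h1 := h i
      have h2 : (z - x₀) i = z i - x₀ i := rfl
      have h3 : ‖(z - x₀) i‖ = |z i - x₀ i| := by rw [h2]; rfl
      have h4 : ‖(z - x₀) i‖ < R / Real.sqrt n := by rw [h3]; exact h1
      have h5 : ‖(z - x₀) i‖^2 < (R / Real.sqrt n)^2 := by
        apply sq_lt_sq'
        · have := norm_nonneg ((z - x₀) i); linarith
        · exact h4
      have h6 : (R / Real.sqrt n)^2 = R^2 / n := by
        rw [div_pow, Real.sq_sqrt (by positivity : (0:ℝ) ≤ (n:ℝ))]
      linarith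
    calc ∑ i, ‖(z - x₀) i‖^2 < ∑ _i : Fin n, R^2 / n := by
          apply Finset.sum_lt_sum_of_nonempty
          · exact Finset.univ_nonempty_iff.2 ⟨⟨0, hn⟩⟩
          · exact fun i _ => hbound i
      _ = n * (R^2 / n) := by rw [Finset.sum_const, Finset.card_univ, Fintype.card_fin]; ring
      _ = R^2 := by field_simp
  linarith [hsum, hlt]

/-- exponential smallness at the center -/
lemma phi_center_le {R c qb : ℝ} (hn : 1 ≤ n) (hR : 0 < R) (hc : 0 < c) (hqb : 0 < qb)
    {x₀ : EuclideanSpace ℝ (Fin n)} {φ : EuclideanSpace ℝ (Fin n) → ℝ}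
    (hφ : ContDiffOn ℝ 2 φ (closedBall x₀ R))
    (hpde : ∀ x ∈ ball x₀ R, lap φ x = c^2 * φ x)
    (hbd : ∀ x ∈ sphere x₀ R, φ x = qb) :
    φ x₀ ≤ qb * n / (Real.cosh (c * R / Real.sqrt n) + n - 1) := by
  classical
  set D : ℝ := Real.cosh (c * R / Real.sqrt n) + n - 1 with hD
  have hD1 : (1:ℝ) ≤ D := by
    have := Real.one_le_cosh (c * R / Real.sqrt n)
    have hn' : (1:ℝ) ≤ (n:ℝ) := by exact_mod_cast hn
    simp only [hD]; linarith
  have hDpos : 0 < D := by linarith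
  set γ : ℝ := qb / D with hγ
  have hγpos : 0 < γ := div_pos hqb hDpos
  set f : ℝ → ℝ := fun t => γ * Real.cosh (c*t) with hf
  set w : E → ℝ := fun z => ∑ i, f (z i - x₀ i) with hw
  have hf' : ∀ t, HasDerivAt f (γ * (Real.sinh (c*t) * c)) t :=
    fun t => (cosh_hasDeriv c t).const_mul γ
  have hf'' : ∀ t, HasDerivAt (fun t => γ * (Real.sinh (c*t) * c)) (γ * (Real.cosh (c*t) * c * c)) t := by
    intro t
    have := (sinh_hasDeriv c t).const_mul γ
    simpa [mul_assoc] using this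
  have hwlap : ∀ x : E, lap w x = c^2 * w x := by
    intro x
    rw [hw, lap_sum_coord hf' hf'' x₀ x]
    rw [Finset.mul_sum]
    apply Finset.sum_congr rfl
    intro i _
    simp only [hf]
    ring
  have hwsmooth : ContDiffOn ℝ 2 w (closedBall x₀ R) := by
    apply ContDiff.contDiffOn
    apply ContDiff.sum
    intro i _
    apply ContDiff.mul contDiff_const
    apply Real.contDiff_cosh.comp
    apply ContDiff.mul contDiff_const
    exact ((EuclideanSpace.proj i : E →L[ℝ] ℝ).contDiff).sub contDiff_const
  have hwbd : ∀ z ∈ sphere x₀ R, φ z ≤ w z := by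
    intro z hz
    rw [hbd z hz, hw]
    obtain ⟨i₀, hi₀⟩ := exists_big_coord hn hR hz
    have hsum_ge : D ≤ ∑ i, Real.cosh (c * (z i - x₀ i)) := by
      have key : Real.cosh (c * R / Real.sqrt n) ≤ Real.cosh (c * (z i₀ - x₀ i₀)) := by
        apply Real.cosh_le_cosh.2
        have hns : (0:ℝ) < Real.sqrt n := Real.sqrt_pos.2 (by exact_mod_cast Nat.lt_of_lt_of_le Nat.zero_lt_one hn)
        rw [abs_mul, abs_of_pos hc]
        rw [abs_of_nonneg (by positivity : (0:ℝ) ≤ c * R / Real.sqrt n)]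
        calc c * R / Real.sqrt n = c * (R / Real.sqrt n) := by ring
          _ ≤ c * |z i₀ - x₀ i₀| := by
              apply mul_le_mul_of_nonneg_left hi₀ hc.le
      have h2 : ∑ i, (Real.cosh (c * (z i - x₀ i)) - 1) ≥ Real.cosh (c * (z i₀ - x₀ i₀)) - 1 := by
        apply Finset.single_le_sum (f := fun i => Real.cosh (c * (z i - x₀ i)) - 1)
        · intro i _
          linarith [Real.one_le_cosh (c * (z i - x₀ i))]
        · exact Finset.mem_univ i₀
      have h3 : ∑ i, (Real.cosh (c * (z i - x₀ i)) - 1)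
          = (∑ i, Real.cosh (c * (z i - x₀ i))) - n := by
        rw [Finset.sum_sub_distrib]
        simp
      rw [hD]
      rw [h3] at h2
      linarith
    calc qb = γ * D := by rw [hγ]; field_simp
      _ ≤ γ * ∑ i, Real.cosh (c * (z i - x₀ i)) := by nlinarith
      _ = ∑ i, f (z i - x₀ i) := by rw [Finset.mul_sum]
  have hcomp := comparison_le hR hc hφ hpde hwsmooth (fun x _ => hwlap x) hwbd
  have hx₀ : x₀ ∈ closedBall x₀ R := mem_closedBall_self hR.le
  have h1 := hcomp x₀ hx₀
  have h2 : w x₀ = qb * n / D := by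
    show (∑ i, f (x₀ i - x₀ i)) = qb * n / D
    have : ∀ i : Fin n, f (x₀ i - x₀ i) = γ := by
      intro i; simp [hf]
    rw [Finset.sum_congr rfl fun i _ => this i]
    rw [Finset.sum_const, Finset.card_univ, Fintype.card_fin]
    rw [hγ]
    field_simp
    rw [nsmul_eq_mul, div_eq_mul_inv]; linear_combination (qb * (n:ℝ)) * mul_inv_cancel₀ hDpos.ne'
  rw [← h2]
  exact h1

section ODE

variable {R c qb : ℝ} {x₀ : EuclideanSpace ℝ (Fin n)} {φ : EuclideanSpace ℝ (Fin n) → ℝ}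

set_option maxHeartbeats 2000000 in
/-- strict monotonicity of the radial profile -/
lemma phi_strictMono (hn : 1 ≤ n) (hR : 0 < R) (hc : 0 < c) (hqb : 0 < qb)
    (hφ : ContDiffOn ℝ 2 φ (closedBall x₀ R))
    (hpde : ∀ x ∈ ball x₀ R, lap φ x = c^2 * φ x)
    (hbd : ∀ x ∈ sphere x₀ R, φ x = qb) :
    StrictMonoOn (fun ρ => φ (x₀ + ρ • (ee (⟨0, hn⟩ : Fin n)))) (Icc 0 R) := by
  classical
  set i₀ : Fin n := ⟨0, hn⟩ with hi₀
  set v : E := ee i₀ with hvdef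
  have hv1 : ‖v‖ = 1 := by
    rw [hvdef]
    unfold ee
    rw [EuclideanSpace.norm_single]
    norm_num
  set g : ℝ → ℝ := fun t => φ (x₀ + t • v) with hg
  set pt : ℝ → E := fun t => x₀ + t • v with hptdef
  have hptdist : ∀ t, dist (pt t) x₀ = |t| := by
    intro t
    rw [hptdef, dist_eq_norm]
    simp [norm_smul, hv1]
  have hptCB : ∀ t, |t| ≤ R → pt t ∈ closedBall x₀ R := by
    intro t ht; rw [mem_closedBall, hptdist]; exact ht
  have hptB : ∀ t, |t| < R → pt t ∈ ball x₀ R := by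
    intro t ht; rw [mem_ball, hptdist]; exact ht
  have hrad : ∀ x ∈ closedBall x₀ R, φ x = g (dist x x₀) := by
    intro x hx
    have hd : dist x x₀ ∈ Icc 0 R := ⟨dist_nonneg, mem_closedBall.1 hx⟩
    have h1 : pt (dist x x₀) ∈ closedBall x₀ R := hptCB _ (by rw [abs_of_nonneg hd.1]; exact hd.2)
    exact radial_eq hR hc hφ hpde hbd hx h1 (by rw [hptdist, abs_of_nonneg hd.1])
  have hCBat : ∀ z ∈ ball x₀ R, ContDiffAt ℝ 2 φ z := fun z hz =>
    hφ.contDiffAt (Filter.mem_of_superset ((isOpen_ball).mem_nhds hz) ball_subset_closedBall)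
  set d : ℝ → ℝ := fun t => fderiv ℝ φ (pt t) v with hd
  -- g has derivative d on the open interval
  have hgderiv : ∀ t ∈ Ioo (-R) R, HasDerivAt g (d t) t := by
    intro t ht
    have habs : |t| < R := abs_lt.2 ⟨ht.1, ht.2⟩
    exact slice_hasDerivAt ((hCBat _ (hptB t habs)).differentiableAt (by norm_num))
  -- d is continuous on the open interval
  have hdcont : ContinuousOn d (Ioo (-R) R) := by
    have h1 : ContinuousOn (fderiv ℝ φ) (ball x₀ R) :=
      (hφ.mono ball_subset_closedBall).continuousOn_fderiv_of_isOpen isOpen_ball (by norm_num)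
    have h2 : ContinuousOn pt (Ioo (-R) R) := (by continuity : Continuous pt).continuousOn
    have h3 : MapsTo pt (Ioo (-R) R) (ball x₀ R) := fun t ht => hptB t (abs_lt.2 ⟨ht.1, ht.2⟩)
    have h4 : ContinuousOn (fun t => fderiv ℝ φ (pt t)) (Ioo (-R) R) := h1.comp h2 h3
    exact ((ContinuousLinearMap.apply ℝ ℝ v).continuous.comp_continuousOn h4)
  -- d 0 = 0 by symmetry
  have hd0 : d 0 = 0 := by
    have h0mem : (0:ℝ) ∈ Ioo (-R) R := ⟨by linarith, hR⟩
    have hg0 : HasDerivAt g (d 0) 0 := hgderiv 0 h0mem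
    have hsym : ∀ᶠ s in nhds (0:ℝ), g (-s) = g s := by
      have : Ioo (-R) R ∈ nhds (0:ℝ) := (isOpen_Ioo).mem_nhds h0mem
      filter_upwards [this] with s hs
      have h1 : pt (-s) ∈ closedBall x₀ R := hptCB _ (by rw [abs_neg]; exact (abs_lt.2 ⟨hs.1, hs.2⟩).le)
      have h2 : pt s ∈ closedBall x₀ R := hptCB _ (abs_lt.2 ⟨hs.1, hs.2⟩).le
      have := radial_eq hR hc hφ hpde hbd h1 h2 (by rw [hptdist, hptdist, abs_neg])
      exact this
    have hneg : HasDerivAt (fun s => g (-s)) (-(d 0)) 0 := by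
      have h1 : HasDerivAt (fun s : ℝ => -s) (-1 : ℝ) 0 := (hasDerivAt_id (0:ℝ)).neg
      have hg0' : HasDerivAt g (d 0) (-(0:ℝ)) := by simpa using hg0
      have h2 := hg0'.comp (0:ℝ) (by simpa using h1)
      simpa [neg_zero, Function.comp_def] using h2
    have huniq : HasDerivAt g (-(d 0)) 0 := by
      apply hneg.congr_of_eventuallyEq
      filter_upwards [hsym] with s hs
      exact hs.symm
    have := huniq.unique hg0
    linarith
  -- the radial ODE
  have hODE : ∀ t ∈ Ioo (0:ℝ) R, HasDerivAt d (c^2 * g t - ((n:ℝ)-1) * (d t / t)) t := by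
    intro t ht
    have htR : |t| < R := by rw [abs_of_pos ht.1]; exact ht.2
    have hφat : ContDiffAt ℝ 2 φ (pt t) := hCBat _ (hptB t htR)
    set H : E →L[ℝ] E →L[ℝ] ℝ := fderiv ℝ (fderiv ℝ φ) (pt t) with hH
    have hdH : HasDerivAt d (H v v) t := by
      have h1 := (hasFDerivAt_fderiv_apply hφat v).comp_hasDerivAt t (line_hasDerivAt x₀ v t)
      rw [ContinuousLinearMap.comp_apply, ContinuousLinearMap.apply_apply] at h1
      exact h1
    have hterm : ∀ j : Fin n, fderiv ℝ (fun z => fderiv ℝ φ z (ee j)) (pt t) (ee j) = H (ee j) (ee j) := by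
      intro j
      rw [(hasFDerivAt_fderiv_apply hφat (ee j)).fderiv]
      rw [ContinuousLinearMap.comp_apply, ContinuousLinearMap.apply_apply]
    have hoff : ∀ j : Fin n, j ≠ i₀ → H (ee j) (ee j) = d t / t := by
      intro j hj
      set u : E := ee j with hu
      set q : ℝ → ℝ := fun s => fderiv ℝ φ (pt t + s • u) u with hq
      set r : ℝ → ℝ := fun s => Real.sqrt (t^2 + s^2) with hrdef
      have hu1 : ‖u‖ = 1 := by
        rw [hu]; unfold ee; rw [EuclideanSpace.norm_single]; norm_num
      have hvu : (inner ℝ v u : ℝ) = 0 := by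
        rw [hu, hvdef]; unfold ee
        rw [EuclideanSpace.inner_single_left]
        simp [EuclideanSpace.single_apply, Ne.symm hj]
      set ε : ℝ := Real.sqrt ((R^2 - t^2)/2) with hε
      have hR2t2 : (0:ℝ) < (R^2 - t^2)/2 := by nlinarith [ht.1, ht.2]
      have hεpos : 0 < ε := Real.sqrt_pos.2 hR2t2
      have hball2 : ∀ s : ℝ, |s| < ε → t^2 + s^2 < R^2 := by
        intro s hs
        have h1 : s^2 < (R^2 - t^2)/2 := by
          have h2 := Real.sq_sqrt hR2t2.le
          have h3 : |s|^2 < ε^2 := by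
            apply sq_lt_sq' _ hs
            linarith [abs_nonneg s]
          rw [sq_abs] at h3
          rw [hε] at h3
          rw [h2] at h3
          exact h3
        nlinarith
      have hrpos : ∀ s : ℝ, 0 < r s := by
        intro s
        apply Real.sqrt_pos.2
        nlinarith [sq_nonneg s, ht.1]
      have hrlt : ∀ s : ℝ, |s| < ε → r s < R := by
        intro s hs
        rw [hrdef]
        have := hball2 s hs
        calc Real.sqrt (t^2 + s^2) < Real.sqrt (R^2) := Real.sqrt_lt_sqrt (by positivity) this
          _ = R := Real.sqrt_sq hR.le
      have hr0 : r 0 = t := by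
        rw [hrdef]
        simp [Real.sqrt_sq ht.1.le]
      have hnormts : ∀ s : ℝ, ‖t • v + s • u‖ = r s := by
        intro s
        have h2 : ‖t • v + s • u‖^2 = t^2 + s^2 := by
          rw [norm_add_sq_real, norm_smul, norm_smul, hv1, hu1]
          rw [real_inner_smul_left, real_inner_smul_right, hvu]
          simp [sq_abs]
        have h3 : r s = Real.sqrt (t^2 + s^2) := rfl
        rw [h3, ← h2, Real.sqrt_sq (norm_nonneg _)]
      have hdisteq : ∀ s : ℝ, dist (pt t + s • u) x₀ = r s := by
        intro s
        rw [dist_eq_norm, ← hnormts s]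
        congr 1
        rw [hptdef]
        simp only [add_assoc, add_sub_cancel_left]
      have hmem : ∀ s : ℝ, |s| < ε → (pt t + s • u) ∈ ball x₀ R := by
        intro s hs
        rw [mem_ball, hdisteq]
        exact hrlt s hs
      have hheq : ∀ s : ℝ, |s| < ε → φ (pt t + s • u) = g (r s) := by
        intro s hs
        rw [hrad _ (ball_subset_closedBall (hmem s hs)), hdisteq]
      have hrder : ∀ s : ℝ, HasDerivAt r (s / r s) s := by
        intro s
        have h1 : HasDerivAt (fun s : ℝ => t^2 + s^2) (2*s) s := by
          simpa using ((hasDerivAt_pow 2 s).const_add (t^2))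
        have h2 := (Real.hasDerivAt_sqrt (ne_of_gt (by nlinarith [sq_nonneg s, ht.1] : (0:ℝ) < t^2 + s^2))).comp s h1
        have h3 : 1 / (2 * Real.sqrt (t^2 + s^2)) * (2*s) = s / r s := by
          rw [hrdef]
          field_simp
        rw [← h3]
        exact h2
      have hkder : ∀ s : ℝ, |s| < ε → HasDerivAt (fun s' => g (r s')) (d (r s) * (s / r s)) s := by
        intro s hs
        have hrmem : r s ∈ Ioo (-R) R := ⟨by linarith [hrpos s], hrlt s hs⟩
        exact (hgderiv (r s) hrmem).comp s (hrder s)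
      have hqder : ∀ s : ℝ, |s| < ε → HasDerivAt (fun s' => φ (pt t + s' • u)) (q s) s := by
        intro s hs
        exact slice_hasDerivAt ((hCBat _ (hmem s hs)).differentiableAt (by norm_num))
      have hqeq : ∀ s : ℝ, |s| < ε → q s = d (r s) * (s / r s) := by
        intro s hs
        have hev : (fun s' => g (r s')) =ᶠ[nhds s] (fun s' => φ (pt t + s' • u)) := by
          have hopen : Metric.ball (0:ℝ) ε ∈ nhds s := by
            apply (Metric.isOpen_ball).mem_nhds
            rw [Metric.mem_ball, Real.dist_eq, sub_zero]
            exact hs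
          filter_upwards [hopen] with s' hs'
          rw [Metric.mem_ball, Real.dist_eq, sub_zero] at hs'
          exact (hheq s' hs').symm
        have h1 : HasDerivAt (fun s' => φ (pt t + s' • u)) (d (r s) * (s / r s)) s :=
          (hkder s hs).congr_of_eventuallyEq hev.symm
        exact (hqder s hs).unique h1
      have hdr : HasDerivAt (fun s => d (r s)) (H v v * (0 / r 0)) 0 := by
        have h1 : HasDerivAt d (H v v) (r 0) := by rw [hr0]; exact hdH
        exact h1.comp 0 (hrder 0)
      have hFK : HasDerivAt (fun s => (d (r s) / r s) * s) (d t / t) 0 := by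
        have hdiv : HasDerivAt (fun s => d (r s) / r s)
            ((H v v * (0 / r 0) * r 0 - d (r 0) * (0 / r 0)) / (r 0)^2) 0 :=
          hdr.div (hrder 0) (ne_of_gt (hrpos 0))
        have h2 := hdiv.mul (hasDerivAt_id 0)
        have h3 : (H v v * (0 / r 0) * r 0 - d (r 0) * (0 / r 0)) / (r 0)^2 * id 0
            + (d (r 0) / r 0) * 1 = d t / t := by
          rw [hr0]; simp
        rw [← h3]
        simpa [Pi.mul_def] using h2
      have hq0 : HasDerivAt q (d t / t) 0 := by
        apply hFK.congr_of_eventuallyEq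
        have hopen : Metric.ball (0:ℝ) ε ∈ nhds (0:ℝ) := by
          apply (Metric.isOpen_ball).mem_nhds
          rw [Metric.mem_ball, Real.dist_eq, sub_zero]
          simpa using hεpos
        filter_upwards [hopen] with s hs
        rw [Metric.mem_ball, Real.dist_eq, sub_zero] at hs
        rw [hqeq s hs]
        rw [mul_comm (d (r s))  (s / r s), div_mul_eq_mul_div, mul_comm s (d (r s)), mul_div_assoc]
        ring
      have hqH : HasDerivAt q (H u u) 0 := by
        have hl : HasDerivAt (fun s : ℝ => pt t + s • u) u (0:ℝ) := line_hasDerivAt (pt t) u 0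
        have hφat' : ContDiffAt ℝ 2 φ (pt t + (0:ℝ) • u) := by
          rw [show pt t + (0:ℝ) • u = pt t by simp]
          exact hφat
        have h1 := (hasFDerivAt_fderiv_apply hφat' u).comp_hasDerivAt (0:ℝ) hl
        rw [ContinuousLinearMap.comp_apply, ContinuousLinearMap.apply_apply] at h1
        rw [show pt t + (0:ℝ) • u = pt t by simp] at h1
        exact h1
      exact hqH.unique hq0
    -- combine the PDE with the term identities
    have hsum := hpde (pt t) (hptB t htR)
    have hlap : lap φ (pt t) = H v v + ((n:ℝ)-1) * (d t / t) := by
      unfold lap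
      rw [Finset.sum_congr rfl fun j _ => hterm j]
      rw [← Finset.add_sum_erase _ _ (Finset.mem_univ i₀)]
      congr 1
      have h1 : ∀ j ∈ Finset.univ.erase i₀, H (ee j) (ee j) = d t / t := by
        intro j hjmem
        exact hoff j (Finset.mem_erase.1 hjmem).1
      rw [Finset.sum_congr rfl h1, Finset.sum_const, Finset.card_erase_of_mem (Finset.mem_univ i₀)]
      rw [Finset.card_univ, Fintype.card_fin]
      rw [nsmul_eq_mul, Nat.cast_sub hn]
      norm_num
    rw [hlap] at hsum
    have hgeq : φ (pt t) = g t := rfl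
    rw [hgeq] at hsum
    have : H v v = c^2 * g t - ((n:ℝ)-1) * (d t / t) := by linarith
    rw [← this]
    exact hdH
  -- positivity of g on [0,R]
  have hgpos : ∀ t ∈ Icc (0:ℝ) R, 0 < g t := by
    intro t ht
    exact phi_pos hn hR hc hqb hφ hpde hbd _ (hptCB t (by rw [abs_of_nonneg ht.1]; exact ht.2))
  set m : ℝ → ℝ := fun t => t^(n-1) * d t with hm
  have hmderiv : ∀ t ∈ Ioo (0:ℝ) R, HasDerivAt m (c^2 * t^(n-1) * g t) t := by
    intro t ht
    have h1 := (hasDerivAt_pow (n-1) t).mul (hODE t ht)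
    have h2 : (↑(n-1) : ℝ) * t^(n-1-1) * d t + t^(n-1) * (c^2 * g t - ((n:ℝ)-1) * (d t / t))
        = c^2 * t^(n-1) * g t := by
      have hcast : (↑(n-1):ℝ) = (n:ℝ) - 1 := by
        rw [Nat.cast_sub hn]; norm_num
      rcases Nat.lt_or_ge n 2 with h | h
      · have hn1 : n = 1 := by omega
        subst hn1
        norm_num
      · have hpow : t^(n-1) = t^(n-1-1) * t := by
          rw [← pow_succ]
          congr 1
          omega
        rw [hcast, hpow]
        have htne : t ≠ 0 := ne_of_gt ht.1
        field_simp
        ring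
    rw [← h2]
    exact h1
  have hmcont : ContinuousOn m (Ico (0:ℝ) R) := by
    apply ContinuousOn.mul
    · exact (continuous_pow (n-1)).continuousOn
    · apply hdcont.mono
      intro s hs
      exact ⟨by linarith [hs.1], hs.2⟩
  have hm0 : m 0 = 0 := by
    have : m 0 = (0:ℝ)^(n-1) * d 0 := rfl
    rw [this, hd0, mul_zero]
  have hmmono : StrictMonoOn m (Ico (0:ℝ) R) := by
    apply strictMonoOn_of_deriv_pos (convex_Ico _ _) hmcont
    intro t ht
    rw [interior_Ico] at ht
    rw [(hmderiv t ht).deriv]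
    have h1 := hgpos t ⟨ht.1.le, ht.2.le⟩
    have h2 := pow_pos ht.1 (n-1)
    positivity
  have hdpos : ∀ t ∈ Ioo (0:ℝ) R, 0 < d t := by
    intro t ht
    have h1 : m 0 < m t := hmmono ⟨le_refl 0, hR⟩ ⟨ht.1.le, ht.2⟩ ht.1
    rw [hm0] at h1
    have h2 : (0:ℝ) < t^(n-1) * d t := h1
    have hp := pow_pos ht.1 (n-1)
    by_contra hneg
    push_neg at hneg
    nlinarith [mul_nonpos_of_nonneg_of_nonpos hp.le hneg]
  have hgcont : ContinuousOn g (Icc (0:ℝ) R) := by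
    apply hφ.continuousOn.comp ((by continuity : Continuous pt).continuousOn)
    intro t ht
    exact hptCB t (by rw [abs_of_nonneg ht.1]; exact ht.2)
  apply strictMonoOn_of_deriv_pos (convex_Icc _ _) hgcont
  intro t ht
  rw [interior_Icc] at ht
  rw [(hgderiv t ⟨by linarith [ht.1, hR], ht.2⟩).deriv]
  exact hdpos t ht

end ODE

set_option maxHeartbeats 1000000 in
/-- arithmetic choice of the decay rate -/
lemma k0_exists (hn : 1 ≤ n) {c Rbar : ℝ} (hc : 0 < c) (hRbar : 0 < Rbar) :
    ∃ k₀ > (0:ℝ), ∀ R, Rbar ≤ R →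
      (n:ℝ) * Real.exp (k₀ * R) ≤ Real.cosh (c * R / Real.sqrt n) + n - 1 := by
  have hn' : (1:ℝ) ≤ (n:ℝ) := by exact_mod_cast hn
  have hsn : (1:ℝ) ≤ Real.sqrt n := by
    rw [show (1:ℝ) = Real.sqrt 1 by simp]
    exact Real.sqrt_le_sqrt hn'
  have hsnpos : (0:ℝ) < Real.sqrt n := by linarith
  set a : ℝ := c / Real.sqrt n with ha
  have hapos : 0 < a := div_pos hc hsnpos
  set L : ℝ := Real.log (2*n) with hL
  have hLpos : 0 < L := Real.log_pos (by push_cast; linarith)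
  set Rstar : ℝ := max Rbar (2*L/a) with hRstar
  have hRstarpos : 0 < Rstar := lt_of_lt_of_le hRbar (le_max_left _ _)
  have hRstar2 : 2*L/a ≤ Rstar := le_max_right _ _
  set D₀ : ℝ := Real.cosh (a*Rbar) + n - 1 with hD₀
  have hcoshRbar : 1 < Real.cosh (a*Rbar) := Real.one_lt_cosh.2 (by positivity)
  have hD₀n : (n:ℝ) < D₀ := by rw [hD₀]; linarith
  have hnpos : (0:ℝ) < n := by linarith
  have hD₀pos : 0 < D₀ := by linarith
  have hlogpos : 0 < Real.log (D₀/n) := Real.log_pos (by rw [lt_div_iff₀ hnpos]; linarith)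
  refine ⟨min (a/2) (Real.log (D₀/n) / Rstar), lt_min (by positivity) (by positivity), ?_⟩
  intro R hRR
  have hRpos : 0 < R := lt_of_lt_of_le hRbar hRR
  set k₀ : ℝ := min (a/2) (Real.log (D₀/n) / Rstar) with hk₀
  have hk₀pos : 0 < k₀ := lt_min (by positivity) (by positivity)
  have haR : c * R / Real.sqrt n = a * R := by rw [ha]; ring
  rw [haR]
  rcases le_or_gt R Rstar with hcase | hcase
  · -- small R regime
    have h1 : k₀ * R ≤ Real.log (D₀/n) := by
      have h2 : k₀ ≤ Real.log (D₀/n) / Rstar := min_le_right _ _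
      calc k₀ * R ≤ (Real.log (D₀/n) / Rstar) * R := by nlinarith
        _ ≤ (Real.log (D₀/n) / Rstar) * Rstar := by
            apply mul_le_mul_of_nonneg_left hcase (by positivity)
        _ = Real.log (D₀/n) := by field_simp
    have h3 : Real.exp (k₀ * R) ≤ D₀/n := by
      calc Real.exp (k₀ * R) ≤ Real.exp (Real.log (D₀/n)) := Real.exp_le_exp.2 h1
        _ = D₀/n := Real.exp_log (by positivity)
    have h4 : (n:ℝ) * Real.exp (k₀*R) ≤ D₀ := by
      calc (n:ℝ) * Real.exp (k₀*R) ≤ n * (D₀/n) := by nlinarith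
        _ = D₀ := by field_simp
    have h5 : Real.cosh (a*Rbar) ≤ Real.cosh (a*R) := by
      apply Real.cosh_le_cosh.2
      rw [abs_of_nonneg (by positivity), abs_of_nonneg (by positivity)]
      nlinarith
    rw [hD₀] at h4
    linarith
  · -- large R regime
    have h1 : k₀ * R ≤ a*R - L := by
      have h2 : k₀ ≤ a/2 := min_le_left _ _
      have h3 : (a/2) * Rstar ≥ L := by
        calc (a/2) * Rstar ≥ (a/2) * (2*L/a) := by
              apply mul_le_mul_of_nonneg_left hRstar2 (by positivity)
          _ = L := by field_simp
      calc k₀ * R ≤ (a/2) * R := by nlinarith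
        _ = a*R - (a/2)*R := by ring
        _ ≤ a*R - (a/2)*Rstar := by nlinarith [hcase]
        _ ≤ a*R - L := by linarith
    have h2 : Real.exp (k₀*R) ≤ Real.exp (a*R) / (2*n) := by
      calc Real.exp (k₀*R) ≤ Real.exp (a*R - L) := Real.exp_le_exp.2 h1
        _ = Real.exp (a*R) / (2*n) := by
            rw [Real.exp_sub, hL, Real.exp_log (by positivity)]
    have h3 : (n:ℝ) * Real.exp (k₀*R) ≤ Real.exp (a*R) / 2 := by
      calc (n:ℝ) * Real.exp (k₀*R) ≤ n * (Real.exp (a*R) / (2*n)) := by nlinarith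
        _ = Real.exp (a*R) / 2 := by field_simp
    have h4 : Real.exp (a*R) / 2 ≤ Real.cosh (a*R) := by
      rw [Real.cosh_eq]
      have := Real.exp_pos (-(a*R))
      linarith
    linarith

end Aux14

set_option maxHeartbeats 1000000 in
theorem stmt14 (n : ℕ) (hn : 1 ≤ n) (c qb Rbar : ℝ)
    (hc : 0 < c) (hqb : 0 < qb) (hRbar : 0 < Rbar) :
    ∃ k₀ > (0:ℝ), ∀ R : ℝ, Rbar ≤ R →
      ∀ x₀ : EuclideanSpace ℝ (Fin n), ∀ φ : EuclideanSpace ℝ (Fin n) → ℝ,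
      ContDiffOn ℝ 2 φ (Metric.closedBall x₀ R) →
      (∀ x ∈ Metric.ball x₀ R,
        (∑ i : Fin n, fderiv ℝ (fun y => fderiv ℝ φ y (EuclideanSpace.single i 1)) x
          (EuclideanSpace.single i 1)) = c ^ 2 * φ x) →
      (∀ x ∈ Metric.sphere x₀ R, φ x = qb) →
      ∃ ϕ : ℝ → ℝ,
        (∀ x ∈ Metric.closedBall x₀ R, φ x = ϕ (dist x x₀)) ∧
        (∀ ρ ∈ Set.Icc (0:ℝ) R, 0 < ϕ ρ) ∧
        StrictMonoOn ϕ (Set.Ioc (0:ℝ) R) ∧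
        ϕ R = qb ∧
        φ x₀ ≤ qb * Real.exp (-k₀ * R) := by
  obtain ⟨k₀, hk₀pos, hk₀⟩ := k0_exists (n := n) hn hc hRbar
  refine ⟨k₀, hk₀pos, ?_⟩
  intro R hRR x₀ φ hφ hpde' hbd
  have hRpos : 0 < R := lt_of_lt_of_le hRbar hRR
  have hpde : ∀ x ∈ Metric.ball x₀ R, lap φ x = c^2 * φ x := by
    intro x hx
    unfold lap ee
    exact hpde' x hx
  set i₀ : Fin n := ⟨0, hn⟩ with hi₀
  have hnorm1 : ‖ee i₀‖ = 1 := by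
    unfold ee
    rw [EuclideanSpace.norm_single]
    norm_num
  have hptdist : ∀ ρ : ℝ, dist (x₀ + ρ • ee i₀) x₀ = |ρ| := by
    intro ρ
    rw [dist_eq_norm]
    simp [norm_smul, hnorm1]
  have hptCB : ∀ ρ : ℝ, |ρ| ≤ R → (x₀ + ρ • ee i₀) ∈ Metric.closedBall x₀ R := by
    intro ρ hρ; rw [Metric.mem_closedBall, hptdist]; exact hρ
  refine ⟨fun ρ => φ (x₀ + ρ • ee i₀), ?_, ?_, ?_, ?_, ?_⟩
  · -- radial representation
    intro x hx
    have hd : dist x x₀ ∈ Icc 0 R := ⟨dist_nonneg, Metric.mem_closedBall.1 hx⟩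
    have h1 : (x₀ + dist x x₀ • ee i₀) ∈ Metric.closedBall x₀ R :=
      hptCB _ (by rw [abs_of_nonneg hd.1]; exact hd.2)
    exact radial_eq hRpos hc hφ hpde hbd hx h1 (by rw [hptdist, abs_of_nonneg hd.1])
  · -- positivity
    intro ρ hρ
    exact phi_pos hn hRpos hc hqb hφ hpde hbd _ (hptCB ρ (by rw [abs_of_nonneg hρ.1]; exact hρ.2))
  · -- strict monotonicity
    exact (phi_strictMono hn hRpos hc hqb hφ hpde hbd).mono Ioc_subset_Icc_self
  · -- boundary value
    apply hbd
    rw [Metric.mem_sphere, hptdist, abs_of_pos hRpos]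
  · -- exponential decay at the center
    have hcen := phi_center_le hn hRpos hc hqb hφ hpde hbd
    have hD := hk₀ R hRR
    set D : ℝ := Real.cosh (c * R / Real.sqrt n) + n - 1 with hDdef
    have hDpos : 0 < D := by
      have h1 : (0:ℝ) < (n:ℝ) * Real.exp (k₀ * R) := by positivity
      linarith
    have hee : Real.exp (-(k₀*R)) * Real.exp (k₀*R) = 1 := by
      rw [← Real.exp_add, neg_add_cancel, Real.exp_zero]
    have h2 : qb * n / D ≤ qb * Real.exp (-(k₀*R)) := by
      rw [div_le_iff₀ hDpos]
      calc qb * (n:ℝ) = qb * Real.exp (-(k₀*R)) * ((n:ℝ) * Real.exp (k₀*R)) := by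
            rw [show qb * Real.exp (-(k₀*R)) * ((n:ℝ) * Real.exp (k₀*R))
                = qb * (n:ℝ) * (Real.exp (-(k₀*R)) * Real.exp (k₀*R)) by ring, hee, mul_one]
        _ ≤ qb * Real.exp (-(k₀*R)) * D := by
            have h3 : (0:ℝ) < qb * Real.exp (-(k₀*R)) := by positivity
            nlinarith
    rw [neg_mul]
    exact le_trans hcen h2
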